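/- (Correctness of the online left-extension step of BWT construction.) Let Σ be a linearly ordered alphabet with minimum element #, let V be a (possibly empty) string over Σ∖{#}, and let a ∈ Σ∖{#}. Let B = BWT(V#), let p be the unique position with B[p] = #, and let B' be B with the character at position p replaced by a. Let q = |{ j : B'[j] < a }| + |{ j ≤ p : B'[j] = a }|. Then the string obtained by inserting # into B' at position q (so that # becomes the q-th character, 0-based) equals BWT(aV#). -/

import Mathlib

/-- The list of all `n` rotations of a string `T` of length `n`:
the `i`-th rotation is `T[i..n−1]T[0..i−1]`. -/
def rotations {α : Type*} (T : List α) : List (List α) :=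
  (List.range T.length).map fun i => T.drop i ++ T.take i

/-- The matrix `M` of `T`: the multiset of all rotations of `T`,
sorted lexicographically. -/
def sortedRotations {α : Type*} [LinearOrder α] (T : List α) : List (List α) :=
  Multiset.sort (rotations T : Multiset (List α)) (· ≤ ·)

/-- The Burrows-Wheeler transform of `T`: the last characters of the
lexicographically sorted rotations of `T`. -/
def bwt {α : Type*} [LinearOrder α] (T : List α) : List α :=
  (sortedRotations T).filterMap List.getLast?

namespace BwtAux
open List

variable {α : Type*} [LinearOrder α]

theorem cons_lt_iff' {b c : α} {s t : List α} :
    (b :: s : List α) < c :: t ↔ b < c ∨ (b = c ∧ s < t) := by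
  constructor
  · intro h
    have h' : List.Lex (· < ·) (b :: s) (c :: t) := h
    cases h' with
    | cons h => exact Or.inr ⟨rfl, h⟩
    | rel h => exact Or.inl h
  · rintro (h | ⟨rfl, h⟩)
    · exact List.Lex.rel h
    · exact List.Lex.cons h

theorem lt_mono (sharp : α) (hsharp : ∀ x : α, sharp ≤ x) (a : α) :
    ∀ (u : List α) (v x y : List α), sharp ∉ u → sharp ∉ v →
      u ++ sharp :: x < v ++ sharp :: y → u ++ sharp :: a :: x < v ++ sharp :: a :: y := by
  intro u
  induction u with
  | nil =>
    intro v x y _ hv h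
    cases v with
    | nil =>
      simp only [nil_append] at h ⊢
      rcases cons_lt_iff'.1 h with h' | ⟨_, h'⟩
      · exact absurd h' (lt_irrefl _)
      · exact cons_lt_iff'.2 (Or.inr ⟨rfl, cons_lt_iff'.2 (Or.inr ⟨rfl, h'⟩)⟩)
    | cons c v' =>
      have hc : sharp < c := (hsharp c).lt_of_ne (fun h' => hv (h' ▸ mem_cons_self (a := c) (l := v')))
      exact cons_lt_iff'.2 (Or.inl hc)
  | cons b u' ih =>
    intro v x y hu hv h
    cases v with
    | nil =>
      exfalso
      simp only [nil_append, cons_append] at h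
      rcases cons_lt_iff'.1 h with h' | ⟨h', _⟩
      · exact absurd h' (not_lt.2 (hsharp b))
      · exact hu (h' ▸ mem_cons_self (a := b) (l := u'))
    | cons c v' =>
      simp only [cons_append] at h ⊢
      rcases cons_lt_iff'.1 h with h' | ⟨rfl, h'⟩
      · exact cons_lt_iff'.2 (Or.inl h')
      · exact cons_lt_iff'.2 (Or.inr ⟨rfl, ih v' x y (fun hm => hu (mem_cons_of_mem _ hm))
          (fun hm => hv (mem_cons_of_mem _ hm)) h'⟩)

theorem lt_indep (sharp : α) (hsharp : ∀ x : α, sharp ≤ x) :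
    ∀ (u : List α) (v s t s' t' : List α), sharp ∉ u → sharp ∉ v → u.length < v.length →
      (u ++ sharp :: s < v ++ sharp :: t ↔ u ++ sharp :: s' < v ++ sharp :: t') := by
  intro u
  induction u with
  | nil =>
    intro v s t s' t' _ hv hlen
    cases v with
    | nil => simp at hlen
    | cons c v' =>
      have hc : sharp < c := (hsharp c).lt_of_ne (fun h' => hv (h' ▸ mem_cons_self (a := c) (l := v')))
      exact iff_of_true (cons_lt_iff'.2 (Or.inl hc)) (cons_lt_iff'.2 (Or.inl hc))
  | cons b u' ih =>
    intro v s t s' t' hu hv hlen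
    cases v with
    | nil => simp at hlen
    | cons c v' =>
      simp only [cons_append, length_cons, Nat.add_lt_add_iff_right] at hlen ⊢
      rw [cons_lt_iff', cons_lt_iff',
        ih v' s t s' t' (fun hm => hu (mem_cons_of_mem _ hm))
          (fun hm => hv (mem_cons_of_mem _ hm)) hlen]

omit [LinearOrder α] in
theorem tw_eq (sharp : α) [DecidableEq α] : ∀ (u x : List α), sharp ∉ u →
    (u ++ sharp :: x).takeWhile (fun c => decide (c ≠ sharp)) = u := by
  intro u x hu
  induction u with
  | nil => simp [takeWhile_cons]
  | cons b u' ih =>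
    have hb : b ≠ sharp := fun h => hu (h ▸ mem_cons_self (a := b) (l := u'))
    rw [cons_append, takeWhile_cons, if_pos (by simpa using hb),
      ih (fun hm => hu (mem_cons_of_mem _ hm))]

omit [LinearOrder α] in
theorem insertIdx_len (w : α) : ∀ (l₁ l₂ : List α),
    (l₁ ++ l₂).insertIdx l₁.length w = l₁ ++ w :: l₂ := by
  intro l₁ l₂
  induction l₁ with
  | nil => simp
  | cons b l ih => simp [insertIdx_succ_cons, ih]

omit [LinearOrder α] in
theorem fm_eq (d : α) : ∀ (Ls : List (List α)), (∀ x ∈ Ls, x ≠ []) →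
    Ls.filterMap List.getLast? = Ls.map (fun x => x.getLast?.getD d) := by
  intro Ls h
  induction Ls with
  | nil => rfl
  | cons x Ls ih =>
    have hx : x ≠ [] := h x mem_cons_self
    obtain ⟨y, hy⟩ : ∃ y, x.getLast? = some y := by
      cases hxl : x.getLast? with
      | none => exact absurd (getLast?_eq_none_iff.1 hxl) hx
      | some y => exact ⟨y, rfl⟩
    simp only [filterMap_cons, map_cons, hy, Option.getD_some]
    rw [ih (fun z hz => h z (mem_cons_of_mem _ hz))]

theorem fincard {β : Type*} : ∀ (l : List β) (P : β → Prop) [DecidablePred P],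
    l.countP (fun x => decide (P x)) =
      ((Finset.univ : Finset (Fin l.length)).filter (fun k => P (l.get k))).card := by
  intro l
  induction l with
  | nil => intro P _; simp
  | cons b l ih =>
    intro P _
    rw [countP_cons, ih]
    rw [Finset.card_filter, Finset.card_filter]
    have : ∀ f : Fin (b :: l).length → ℕ, ∑ k : Fin (b :: l).length, f k
        = ∑ k : Fin (l.length + 1), f (Fin.cast (by simp) k) := by
      intro f
      apply Finset.sum_nbij' (i := fun k => Fin.cast (by simp) k)
        (j := fun k => Fin.cast (by simp) k) <;> simp
    rw [this, Fin.sum_univ_succ]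
    simp only [get_eq_getElem, Fin.coe_cast, Fin.val_succ, Fin.val_zero, getElem_cons_zero,
      getElem_cons_succ]
    by_cases hb : P b <;> simp [hb, add_comm]

omit [LinearOrder α] in
theorem dw_head_not (p : α → Bool) : ∀ (M : List α) (h : α) (t : List α),
    M.dropWhile p = h :: t → ¬ p h = true := by
  intro M
  induction M with
  | nil => intro h t hd; simp at hd
  | cons b M' ih =>
    intro h t hd
    rw [dropWhile_cons] at hd
    by_cases hb : p b = true
    · rw [if_pos hb] at hd; exact ih h t hd
    · rw [if_neg hb] at hd
      cases hd; simpa using hb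

theorem dw_ge {M : List α} (hs : Pairwise (· ≤ ·) M) (w : α) :
    ∀ x ∈ M.dropWhile (fun c => decide (c < w)), w ≤ x := by
  intro x hx
  have hsub : Pairwise (· ≤ ·) (M.dropWhile (fun c => decide (c < w))) :=
    hs.sublist (dropWhile_sublist _)
  cases hdw : M.dropWhile (fun c => decide (c < w)) with
  | nil => rw [hdw] at hx; simp at hx
  | cons h t =>
    have hh : ¬ (h < w) := by simpa using dw_head_not _ M h t hdw
    rw [hdw] at hx hsub
    rcases mem_cons.1 hx with rfl | hxt
    · exact le_of_not_gt hh
    · exact (le_of_not_gt hh).trans ((pairwise_cons.1 hsub).1 x hxt)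

theorem count_tw {M : List α} (hs : Pairwise (· ≤ ·) M) (w : α) :
    M.countP (fun c => decide (c < w)) = (M.takeWhile (fun c => decide (c < w))).length := by
  conv_lhs => rw [← takeWhile_append_dropWhile (p := fun c => decide (c < w)) (l := M)]
  rw [countP_append]
  rw [countP_eq_length.2 (by intro x hx; exact mem_takeWhile_imp (p := fun c => decide (c < w)) hx)]
  rw [countP_eq_zero.2 ?_, Nat.add_zero]
  intro x hx
  simpa using not_lt.2 (dw_ge hs w x hx)

/-- rotation of `V ++ [sharp]` starting at position `j` (for `j ≤ V.length`). -/
def ro (sharp : α) (V : List α) (j : ℕ) : List α := V.drop j ++ sharp :: V.take j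

/-- rotation of `a :: V ++ [sharp]` starting at position `j+1` (for `j ≤ V.length`). -/
def fr (sharp a : α) (V : List α) (j : ℕ) : List α := V.drop j ++ sharp :: a :: V.take j

/-- recover the rotation index from a rotation. -/
def jdx (sharp : α) [DecidableEq α] (V X : List α) : ℕ :=
  V.length - (X.takeWhile (fun c => decide (c ≠ sharp))).length

/-- last character. -/
def lst (sharp : α) (X : List α) : α := X.getLast?.getD sharp

/-- last character of `fr sharp a V j`. -/
def lst' (sharp a : α) (V : List α) (j : ℕ) : α :=
  if j = 0 then a else V.getD (j-1) sharp

theorem card_cast {m n : ℕ} (h : m = n) (P : Fin m → Prop) (P' : Fin n → Prop)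
    [DecidablePred P] [DecidablePred P']
    (hPP : ∀ k : Fin m, P k ↔ P' (Fin.cast h k)) :
    (Finset.univ.filter P).card = (Finset.univ.filter P').card := by
  subst h
  exact congrArg Finset.card (Finset.filter_congr fun k _ => by simpa using hPP k)

end BwtAux

namespace BwtAux
open List

set_option linter.unusedSectionVars false

variable {α : Type*} [LinearOrder α]

theorem ro_zero (sharp : α) (V : List α) : ro sharp V 0 = V ++ sharp :: [] := by
  simp [ro]

theorem jdx_ro (sharp : α) (V : List α) (hV : sharp ∉ V) {j : ℕ} (hj : j ≤ V.length) :
    jdx sharp V (ro sharp V j) = j := by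
  unfold jdx ro
  rw [tw_eq sharp _ _ (fun hm => hV (mem_of_mem_drop hm)), length_drop]
  omega

theorem rot_T (sharp : α) (V : List α) :
    rotations (V ++ [sharp]) = (List.range (V.length + 1)).map (ro sharp V) := by
  unfold rotations
  rw [show (V ++ [sharp]).length = V.length + 1 by simp]
  apply map_congr_left
  intro j hj
  rw [mem_range] at hj
  have hj' : j ≤ V.length := by omega
  rw [drop_append_of_le_length hj', take_append_of_le_length hj']
  simp [ro, append_assoc]

theorem rot_W (sharp a : α) (V : List α) :
    rotations (a :: (V ++ [sharp])) =
      (a :: (V ++ [sharp])) :: (List.range (V.length + 1)).map (fr sharp a V) := by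
  unfold rotations
  rw [show (a :: (V ++ [sharp])).length = (V.length + 1) + 1 by simp]
  rw [range_succ_eq_map]
  simp only [map_cons, drop_zero, take_zero, append_nil, map_map]
  congr 1
  apply map_congr_left
  intro j hj
  rw [mem_range] at hj
  have hj' : j ≤ V.length := by omega
  show (a :: (V ++ [sharp])).drop (j+1) ++ (a :: (V ++ [sharp])).take (j+1) = fr sharp a V j
  rw [drop_succ_cons, take_succ_cons,
    drop_append_of_le_length hj', take_append_of_le_length hj']
  simp [fr, append_assoc]

theorem lst_ro (sharp : α) (V : List α) {j : ℕ} (hj1 : 1 ≤ j) (hj : j ≤ V.length) :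
    lst sharp (ro sharp V j) = V.getD (j-1) sharp := by
  have htk : V.take j ≠ [] := by
    intro h
    have := congrArg List.length h
    simp only [length_take, length_nil] at this
    omega
  obtain ⟨c, x', hcx⟩ : ∃ c x', V.take j = c :: x' := by
    cases h : V.take j with
    | nil => exact absurd h htk
    | cons c x' => exact ⟨c, x', rfl⟩
  unfold lst ro
  rw [getLast?_append_cons, hcx, getLast?_cons_cons, ← hcx]
  rw [getLast?_eq_getElem?]
  have hlen : (V.take j).length = j := by simp; omega
  rw [hlen]
  rw [getElem?_take, if_pos (by omega)]
  rw [getElem?_eq_getElem (by omega)]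
  rw [getD_eq_getElem V sharp (by omega)]
  rfl

theorem lst_ro_zero (sharp : α) (V : List α) : lst sharp (ro sharp V 0) = sharp := by
  unfold lst
  rw [ro_zero]
  rw [show V ++ sharp :: [] = V ++ [sharp] from rfl, getLast?_concat]
  rfl

theorem lst_fr (sharp a : α) (V : List α) {j : ℕ} (hj : j ≤ V.length) :
    lst sharp (fr sharp a V j) = lst' sharp a V j := by
  unfold lst fr lst'
  by_cases h0 : j = 0
  · subst h0
    simp only [if_true]
    rw [getLast?_append_cons, getLast?_cons_cons]
    rfl
  · rw [if_neg h0]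
    have hj1 : 1 ≤ j := by omega
    obtain ⟨c, x', hcx⟩ : ∃ c x', V.take j = c :: x' := by
      cases h : V.take j with
      | nil =>
        exfalso
        have := congrArg List.length h
        simp only [length_take, length_nil] at this
        omega
      | cons c x' => exact ⟨c, x', rfl⟩
    rw [getLast?_append_cons, hcx, getLast?_cons_cons, getLast?_cons_cons, ← hcx]
    have h2 := lst_ro sharp V hj1 hj
    unfold lst ro at h2
    rw [getLast?_append_cons, hcx, getLast?_cons_cons, ← hcx] at h2
    exact h2

theorem ro_lt_mono (sharp : α) (hsharp : ∀ x : α, sharp ≤ x) (a : α) (V : List α)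
    (hV : sharp ∉ V) {i j : ℕ} (h : ro sharp V i < ro sharp V j) :
    fr sharp a V i < fr sharp a V j := by
  unfold ro at h
  unfold fr
  exact lt_mono sharp hsharp a _ _ _ _ (fun hm => hV (mem_of_mem_drop hm))
    (fun hm => hV (mem_of_mem_drop hm)) h

theorem cmp_lt (sharp : α) (hsharp : ∀ x : α, sharp ≤ x) (a : α) (V : List α)
    (hV : sharp ∉ V) {j : ℕ} (hj : j < V.length) :
    (fr sharp a V j < a :: (V ++ [sharp])) ↔
      (V.getD j sharp < a ∨ (V.getD j sharp = a ∧ ro sharp V (j+1) < ro sharp V 0)) := by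
  have hVd : V.getD j sharp = V[j]'hj := getD_eq_getElem V sharp hj
  have hdropc : V.drop j = V[j]'hj :: V.drop (j+1) := drop_eq_getElem_cons hj
  have hfr : fr sharp a V j = (V[j]'hj) :: (V.drop (j+1) ++ sharp :: a :: V.take j) := by
    unfold fr; rw [hdropc]; rfl
  have hW : a :: (V ++ [sharp]) = a :: (V ++ sharp :: []) := rfl
  rw [hfr, hW, cons_lt_iff', hVd]
  constructor
  · rintro (h | ⟨heq, h⟩)
    · exact Or.inl h
    · refine Or.inr ⟨heq, ?_⟩
      rw [ro_zero]
      unfold ro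
      exact (lt_indep sharp hsharp (V.drop (j+1)) V (a :: V.take j) [] (V.take (j+1)) []
        (fun hm => hV (mem_of_mem_drop hm)) hV (by rw [length_drop]; omega)).1 h
  · rintro (h | ⟨heq, h⟩)
    · exact Or.inl h
    · refine Or.inr ⟨heq, ?_⟩
      rw [ro_zero] at h
      unfold ro at h
      exact (lt_indep sharp hsharp (V.drop (j+1)) V (a :: V.take j) [] (V.take (j+1)) []
        (fun hm => hV (mem_of_mem_drop hm)) hV (by rw [length_drop]; omega)).2 h

theorem cmp_top (sharp : α) (hsharp : ∀ x : α, sharp ≤ x) (a : α) (ha : a ≠ sharp)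
    (V : List α) : fr sharp a V V.length < a :: (V ++ [sharp]) := by
  have : fr sharp a V V.length = sharp :: a :: V.take V.length := by
    unfold fr; rw [drop_length]; rfl
  rw [this]
  exact List.Lex.rel ((hsharp a).lt_of_ne (Ne.symm ha))

end BwtAux

namespace BwtAux
open List

set_option linter.unusedSectionVars false

variable {α : Type*} [LinearOrder α]

theorem M_perm (sharp a : α) (V : List α) (hV : sharp ∉ V) (L : List (List α))
    (hLperm : L ~ rotations (V ++ [sharp])) :
    L.map (fun X => fr sharp a V (jdx sharp V X)) ~
      (List.range (V.length + 1)).map (fr sharp a V) := by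
  have h1 := hLperm.map (fun X => fr sharp a V (jdx sharp V X))
  rw [rot_T sharp V, map_map] at h1
  refine h1.trans (Perm.of_eq ?_)
  apply map_congr_left
  intro j hj
  rw [mem_range] at hj
  simp only [Function.comp_apply]
  rw [jdx_ro sharp V hV (by omega)]

theorem M_sorted (sharp : α) (hsharp : ∀ x : α, sharp ≤ x) (a : α) (V : List α)
    (hV : sharp ∉ V) (L : List (List α)) (hLsort : Pairwise (· ≤ ·) L)
    (hmemL : ∀ X ∈ L, ∃ j, j ≤ V.length ∧ X = ro sharp V j ∧ jdx sharp V X = j) :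
    Pairwise (· ≤ ·) (L.map (fun X => fr sharp a V (jdx sharp V X))) := by
  apply (pairwise_map).2
  apply Pairwise.imp_of_mem ?_ hLsort
  intro X Y hX hY hXY
  obtain ⟨i, hile, hXe, hXj⟩ := hmemL X hX
  obtain ⟨j, hjle, hYe, hYj⟩ := hmemL Y hY
  rcases eq_or_lt_of_le hXY with heq | hlt
  · rw [heq]
  · apply le_of_lt
    rw [hXj, hYj]
    apply ro_lt_mono sharp hsharp a V hV
    rw [← hXe, ← hYe]
    exact hlt

theorem sortW (sharp : α) (hsharp : ∀ x : α, sharp ≤ x) (a : α) (ha : a ≠ sharp)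
    (V : List α) (hV : sharp ∉ V) (L : List (List α))
    (hLsort : Pairwise (· ≤ ·) L) (hLperm : L ~ rotations (V ++ [sharp]))
    (hmemL : ∀ X ∈ L, ∃ j, j ≤ V.length ∧ X = ro sharp V j ∧ jdx sharp V X = j) :
    sortedRotations (a :: (V ++ [sharp])) =
      (L.map (fun X => fr sharp a V (jdx sharp V X))).takeWhile
          (fun X => decide (X < a :: (V ++ [sharp])))
        ++ (a :: (V ++ [sharp])) ::
          (L.map (fun X => fr sharp a V (jdx sharp V X))).dropWhile
            (fun X => decide (X < a :: (V ++ [sharp]))) := by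
  set W : List α := a :: (V ++ [sharp]) with hW
  set M : List (List α) := L.map (fun X => fr sharp a V (jdx sharp V X)) with hM
  set pW : List α → Bool := fun X => decide (X < W) with hpW
  have hMsort : Pairwise (· ≤ ·) M := M_sorted sharp hsharp a V hV L hLsort hmemL
  have htwlt : ∀ X ∈ M.takeWhile pW, X < W := by
    intro X hX
    have := mem_takeWhile_imp (p := pW) hX
    simpa [hpW] using this
  have hdwge : ∀ X ∈ M.dropWhile pW, W ≤ X := fun X hX => dw_ge hMsort W X (by convert hX)
  symm
  refine (fun hperm hsorted => Perm.eq_of_pairwise' (r := (· ≤ ·)) hsorted (Multiset.pairwise_sort _ _) hperm) ?_ ?_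
  · -- perm
    have h1 : M.takeWhile pW ++ W :: M.dropWhile pW ~ W :: M := by
      have := perm_middle (a := W) (l₁ := M.takeWhile pW) (l₂ := M.dropWhile pW)
      rwa [takeWhile_append_dropWhile] at this
    refine h1.trans ?_
    have h2 : (W :: M : List (List α)) ~ W :: (List.range (V.length + 1)).map (fr sharp a V) :=
      (M_perm sharp a V hV L hLperm).cons W
    refine h2.trans ?_
    rw [← rot_W sharp a V]
    exact (Multiset.coe_eq_coe.mp (Multiset.sort_eq _ _)).symm
  · -- sorted
    apply (pairwise_append).2
    refine ⟨hMsort.sublist (takeWhile_sublist _), ?_, ?_⟩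
    · apply (pairwise_cons).2
      exact ⟨hdwge, hMsort.sublist (dropWhile_sublist _)⟩
    · intro X hX Y hY
      rcases mem_cons.1 hY with rfl | hY'
      · exact (htwlt X hX).le
      · exact (htwlt X hX).le.trans (hdwge Y hY')

theorem card_reindex (sharp : α) (V : List α) (hV : sharp ∉ V) (L : List (List α))
    (hLnd : L.Nodup)
    (hmemL : ∀ X ∈ L, ∃ j, j ≤ V.length ∧ X = ro sharp V j ∧ jdx sharp V X = j)
    (hallL : ∀ j, j ≤ V.length → ro sharp V j ∈ L)
    (Q : ℕ → Prop) [DecidablePred Q] :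
    (Finset.univ.filter fun k : Fin L.length => Q (jdx sharp V (L.get k))).card
      = ((Finset.range (V.length + 1)).filter Q).card := by
  apply Finset.card_nbij (i := fun k => jdx sharp V (L.get k))
  · intro k hk
    have hkQ : Q (jdx sharp V (L.get k)) := (Finset.mem_filter.1 hk).2
    obtain ⟨j, hjle, hXe, hXj⟩ := hmemL (L.get k) (get_mem L k)
    refine Finset.mem_filter.2 ⟨Finset.mem_range.2 (by beta_reduce; omega), hkQ⟩
  · intro k hk k' hk' he
    have he' : jdx sharp V (L.get k) = jdx sharp V (L.get k') := he
    obtain ⟨j, hjle, hXe, hXj⟩ := hmemL (L.get k) (get_mem L k)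
    obtain ⟨j', hjle', hXe', hXj'⟩ := hmemL (L.get k') (get_mem L k')
    have hgeteq : L.get k = L.get k' := by
      rw [hXj, hXj'] at he'
      rw [hXe, hXe', he']
    have hkk : (k : ℕ) = (k' : ℕ) := by
      have h2 : L[(k:ℕ)] = L[(k':ℕ)] := by simpa [get_eq_getElem] using hgeteq
      exact (hLnd.getElem_inj_iff).1 h2
    exact Fin.ext hkk
  · intro j hj
    have hj' := Finset.mem_filter.1 (Finset.mem_coe.1 hj)
    have hjn : j < V.length + 1 := Finset.mem_range.1 hj'.1
    have hQ : Q j := hj'.2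
    have hjle : j ≤ V.length := by omega
    obtain ⟨k, hk⟩ := mem_iff_get.1 (hallL j hjle)
    refine ⟨k, ?_, ?_⟩
    · apply Finset.mem_coe.2
      refine Finset.mem_filter.2 ⟨Finset.mem_univ _, ?_⟩
      rw [hk, jdx_ro sharp V hV hjle]
      exact hQ
    · show jdx sharp V (L.get k) = j
      rw [hk, jdx_ro sharp V hV hjle]

end BwtAux

namespace BwtAux
open List

set_option maxHeartbeats 1000000 in
theorem main {α : Type*} [LinearOrder α]
    (sharp : α) (hsharp : ∀ x : α, sharp ≤ x)
    (V : List α) (hV : sharp ∉ V) (a : α) (ha : a ≠ sharp)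
    (p : ℕ) (hp : (bwt (V ++ [sharp]))[p]? = some sharp) :
    ((bwt (V ++ [sharp])).set p a).insertIdx
        ((Finset.univ.filter fun j : Fin ((bwt (V ++ [sharp])).set p a).length =>
            ((bwt (V ++ [sharp])).set p a).get j < a).card +
         (Finset.univ.filter fun j : Fin ((bwt (V ++ [sharp])).set p a).length =>
            (j : ℕ) ≤ p ∧ ((bwt (V ++ [sharp])).set p a).get j = a).card)
        sharp =
      bwt (a :: (V ++ [sharp])) := by
  classical
  have hsa : sharp < a := (hsharp a).lt_of_ne (Ne.symm ha)
  set L : List (List α) := sortedRotations (V ++ [sharp]) with hL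
  have hLperm : L ~ rotations (V ++ [sharp]) := Multiset.coe_eq_coe.mp (Multiset.sort_eq _ _)
  have hLsort : Pairwise (· ≤ ·) L := Multiset.pairwise_sort _ _
  have hrotT : rotations (V ++ [sharp]) = (List.range (V.length + 1)).map (ro sharp V) :=
    rot_T sharp V
  have hLlen : L.length = V.length + 1 := by
    rw [hLperm.length_eq, hrotT, length_map, length_range]
  have hmemL : ∀ X ∈ L, ∃ j, j ≤ V.length ∧ X = ro sharp V j ∧ jdx sharp V X = j := by
    intro X hX
    have hX' : X ∈ (List.range (V.length + 1)).map (ro sharp V) := by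
      rw [← hrotT]; exact hLperm.subset hX
    obtain ⟨j, hj, hje⟩ := mem_map.1 hX'
    rw [mem_range] at hj
    have hj' : j ≤ V.length := by omega
    exact ⟨j, hj', hje.symm, by rw [← hje, jdx_ro sharp V hV hj']⟩
  have hallL : ∀ j, j ≤ V.length → ro sharp V j ∈ L := by
    intro j hj
    apply hLperm.mem_iff.2
    rw [hrotT]
    exact mem_map_of_mem (mem_range.2 (by omega))
  have hLnd : L.Nodup := by
    apply (hLperm.nodup_iff).2
    rw [hrotT]
    apply Nodup.map_on ?_ nodup_range
    intro i hi j hj hij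
    rw [mem_range] at hi hj
    have := congrArg (jdx sharp V) hij
    rwa [jdx_ro sharp V hV (by omega), jdx_ro sharp V hV (by omega)] at this
  have hro_ne : ∀ j, ro sharp V j ≠ [] := by
    intro j h; unfold ro at h; simp at h
  have hbwtT : bwt (V ++ [sharp]) = L.map (lst sharp) := by
    show (sortedRotations (V ++ [sharp])).filterMap List.getLast? = _
    rw [← hL]
    exact fm_eq sharp L (fun X hX => by
      obtain ⟨j, _, hXe, _⟩ := hmemL X hX
      rw [hXe]; exact hro_ne j)
  have hBlen : (bwt (V ++ [sharp])).length = V.length + 1 := by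
    rw [hbwtT, length_map, hLlen]
  obtain ⟨hplt, hBp⟩ := List.getElem?_eq_some_iff.1 hp
  have hpltL : p < L.length := by omega
  have hpn : p < V.length + 1 := by omega
  -- the row at position p is rotation 0
  have hLp : L[p]'hpltL = ro sharp V 0 := by
    obtain ⟨j, hjle, hXe, hXj⟩ := hmemL (L[p]'hpltL) (getElem_mem hpltL)
    have hlstp : lst sharp (L[p]'hpltL) = sharp := by
      have h1 : (bwt (V ++ [sharp]))[p]'hplt = lst sharp (L[p]'hpltL) := by
        simp only [hbwtT, getElem_map]
      rw [← h1]; exact hBp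
    by_cases h0 : j = 0
    · rw [hXe, h0]
    · exfalso
      rw [hXe, lst_ro sharp V (by omega) hjle] at hlstp
      have hj1 : j - 1 < V.length := by omega
      rw [getD_eq_getElem V sharp hj1] at hlstp
      exact hV (hlstp ▸ getElem_mem hj1)
  have hjdxp : jdx sharp V (L[p]'hpltL) = 0 := by
    rw [hLp, jdx_ro sharp V hV (by omega)]
  -- B' as a map over L
  have hB' : (bwt (V ++ [sharp])).set p a
      = L.map (fun X => lst' sharp a V (jdx sharp V X)) := by
    apply List.ext_getElem (by rw [length_set, hBlen, length_map, hLlen])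
    intro k h1 h2
    have hkL : k < L.length := by rw [length_map] at h2; exact h2
    rw [getElem_map]
    rw [getElem_set]
    obtain ⟨j, hjle, hXe, hXj⟩ := hmemL (L[k]'hkL) (getElem_mem hkL)
    by_cases hkp : p = k
    · subst hkp
      rw [if_pos rfl]
      have h0 : jdx sharp V (L[p]'hkL) = 0 := hjdxp
      rw [h0]
      simp [lst']
    · rw [if_neg hkp]
      have hBk : (bwt (V ++ [sharp]))[k]'(by omega) = lst sharp (L[k]'hkL) := by
        simp only [hbwtT, getElem_map]
      rw [hBk]
      have hjne : j ≠ 0 := by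
        intro h0
        apply hkp
        have he1 : L[k]'hkL = L[p]'hpltL := by rw [hXe, h0, hLp]
        exact ((hLnd.getElem_inj_iff).1 he1).symm
      rw [hXj, hXe, lst_ro sharp V (by omega) hjle]
      simp [lst', hjne]
  -- abbreviations (written out in full each time)
  have hMsort : Pairwise (· ≤ ·) (L.map (fun X => fr sharp a V (jdx sharp V X))) :=
    M_sorted sharp hsharp a V hV L hLsort hmemL
  have hsortW := sortW sharp hsharp a ha V hV L hLsort hLperm hmemL
  have hmlen : ((bwt (V ++ [sharp])).set p a).length = L.length := by
    rw [length_set, hBlen, hLlen]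
  have hget : ∀ k : Fin ((bwt (V ++ [sharp])).set p a).length,
      ((bwt (V ++ [sharp])).set p a).get k
        = lst' sharp a V (jdx sharp V (L.get (Fin.cast hmlen k))) := by
    intro k
    rw [get_eq_getElem]
    have h1 : ((bwt (V ++ [sharp])).set p a)[(k:ℕ)]'k.2
        = (L.map (fun X => lst' sharp a V (jdx sharp V X)))[(k:ℕ)]'(by
            rw [← hB']; exact k.2) :=
      getElem_of_eq hB' k.2
    rw [h1, getElem_map]
    rfl
  -- index / order facts
  have hidx : ∀ k : Fin L.length, ((k : ℕ) ≤ p ↔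
      (ro sharp V (jdx sharp V (L.get k)) < ro sharp V 0 ∨ jdx sharp V (L.get k) = 0)) := by
    intro k
    obtain ⟨j, hjle, hXe, hXj⟩ := hmemL (L.get k) (get_mem L k)
    constructor
    · intro hkp
      rcases Nat.lt_or_ge (k:ℕ) p with hlt | hge
      · left
        have h1 : L.get k ≤ L[p]'hpltL := by
          have := hLsort.rel_get_of_lt (a := k) (b := ⟨p, hpltL⟩) (by exact hlt)
          simpa using this
        have h2 : L.get k ≠ L[p]'hpltL := by
          intro he
          have h3 : (k:ℕ) = p := (hLnd.getElem_inj_iff).1 (by simpa [get_eq_getElem] using he)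
          omega
        have h3 : L.get k < L[p]'hpltL := lt_of_le_of_ne h1 h2
        rw [hLp] at h3
        rw [hXj, ← hXe]
        exact h3
      · have hkp' : (k:ℕ) = p := by omega
        right
        rw [show k = (⟨p, hpltL⟩ : Fin L.length) from Fin.ext hkp']
        exact hjdxp
    · intro h
      rcases h with hlt | h0
      · by_contra hgt
        push_neg at hgt
        have h1 : L[p]'hpltL ≤ L.get k := by
          have := hLsort.rel_get_of_lt (a := ⟨p, hpltL⟩) (b := k) (by exact hgt)
          simpa using this
        rw [hLp] at h1
        rw [hXj, ← hXe] at hlt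
        exact absurd (lt_of_lt_of_le hlt h1) (lt_irrefl _)
      · rw [hXj] at h0
        have he1 : L.get k = L[p]'hpltL := by
          rw [hXe, h0, hLp]
        have h3 : (k:ℕ) = p := (hLnd.getElem_inj_iff).1 (by simpa [get_eq_getElem] using he1)
        omega
  -- count A
  have hA : (Finset.univ.filter fun j : Fin ((bwt (V ++ [sharp])).set p a).length =>
        ((bwt (V ++ [sharp])).set p a).get j < a).card
      = ((Finset.range (V.length + 1)).filter (fun j => lst' sharp a V j < a)).card := by
    refine (card_cast hmlen _
      (fun k : Fin L.length => lst' sharp a V (jdx sharp V (L.get k)) < a)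
      (fun k => by rw [hget k])).trans ?_
    exact card_reindex sharp V hV L hLnd hmemL hallL (fun j => lst' sharp a V j < a)
  -- count C
  have hC : (Finset.univ.filter fun j : Fin ((bwt (V ++ [sharp])).set p a).length =>
        (j : ℕ) ≤ p ∧ ((bwt (V ++ [sharp])).set p a).get j = a).card
      = ((Finset.range (V.length + 1)).filter
          (fun j => (ro sharp V j < ro sharp V 0 ∨ j = 0) ∧ lst' sharp a V j = a)).card := by
    refine (card_cast hmlen _
      (fun k : Fin L.length => (k : ℕ) ≤ p ∧ lst' sharp a V (jdx sharp V (L.get k)) = a)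
      (fun k => by simp only [hget k, Fin.coe_cast])).trans ?_
    have h2 : (Finset.univ.filter fun k : Fin L.length =>
          (k : ℕ) ≤ p ∧ lst' sharp a V (jdx sharp V (L.get k)) = a)
        = (Finset.univ.filter fun k : Fin L.length =>
          (ro sharp V (jdx sharp V (L.get k)) < ro sharp V 0 ∨ jdx sharp V (L.get k) = 0)
            ∧ lst' sharp a V (jdx sharp V (L.get k)) = a) :=
      Finset.filter_congr (fun k _ => and_congr_left' (hidx k))
    rw [h2]
    exact card_reindex sharp V hV L hLnd hmemL hallL
      (fun j => (ro sharp V j < ro sharp V 0 ∨ j = 0) ∧ lst' sharp a V j = a)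
  -- count q0
  have hq0fin : ((L.map (fun X => fr sharp a V (jdx sharp V X))).takeWhile
        (fun X => decide (X < a :: (V ++ [sharp])))).length
      = ((Finset.range (V.length + 1)).filter
          (fun j => fr sharp a V j < a :: (V ++ [sharp]))).card := by
    rw [show ((L.map (fun X => fr sharp a V (jdx sharp V X))).takeWhile
        (fun X => decide (X < a :: (V ++ [sharp])))).length
        = (L.map (fun X => fr sharp a V (jdx sharp V X))).countP
          (fun X => decide (X < a :: (V ++ [sharp]))) from by
      convert (count_tw hMsort (a :: (V ++ [sharp]))).symm]
    rw [countP_map]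
    refine Eq.trans (Eq.trans ?_
      (fincard L (fun X => fr sharp a V (jdx sharp V X) < a :: (V ++ [sharp])))) ?_
    · rfl
    · exact card_reindex sharp V hV L hLnd hmemL hallL
        (fun j => fr sharp a V j < a :: (V ++ [sharp]))
  -- disjointness and union
  have hdisj : Disjoint
      ((Finset.range (V.length + 1)).filter (fun j => lst' sharp a V j < a))
      ((Finset.range (V.length + 1)).filter
        (fun j => (ro sharp V j < ro sharp V 0 ∨ j = 0) ∧ lst' sharp a V j = a)) := by
    rw [Finset.disjoint_left]
    intro j h1 h2
    have ha1 := (Finset.mem_filter.1 h1).2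
    have ha2 := (Finset.mem_filter.1 h2).2.2
    rw [ha2] at ha1
    exact absurd ha1 (lt_irrefl a)
  -- transport along the shift j ↦ (j+1) mod n
  have htrans : ∀ j, j ≤ V.length →
      ((fr sharp a V j < a :: (V ++ [sharp])) ↔
        (lst' sharp a V (if j = V.length then 0 else j+1) < a ∨
         ((ro sharp V (if j = V.length then 0 else j+1) < ro sharp V 0
            ∨ (if j = V.length then 0 else j+1) = 0)
            ∧ lst' sharp a V (if j = V.length then 0 else j+1) = a))) := by
    intro j hj
    by_cases hend : j = V.length
    · subst hend
      simp only [if_pos rfl]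
      apply iff_of_true (cmp_top sharp hsharp a ha V)
      right
      exact ⟨Or.inr rfl, by simp [lst']⟩
    · have hjlt : j < V.length := by omega
      simp only [if_neg hend]
      rw [cmp_lt sharp hsharp a V hV hjlt]
      have hl' : lst' sharp a V (j+1) = V.getD j sharp := by simp [lst']
      rw [hl']
      constructor
      · rintro (h | ⟨h1, h2⟩)
        · exact Or.inl h
        · exact Or.inr ⟨Or.inl h2, h1⟩
      · rintro (h | ⟨h1, h2⟩)
        · exact Or.inl h
        · rcases h1 with h1 | h1
          · exact Or.inr ⟨h2, h1⟩
          · omega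
  -- the shift bijection
  have hbij : ((Finset.range (V.length + 1)).filter
        (fun j => fr sharp a V j < a :: (V ++ [sharp]))).card
      = ((Finset.range (V.length + 1)).filter
          (fun j => lst' sharp a V j < a ∨
            ((ro sharp V j < ro sharp V 0 ∨ j = 0) ∧ lst' sharp a V j = a))).card := by
    apply Finset.card_nbij (i := fun j => if j = V.length then 0 else j + 1)
    · intro j hj
      have hj1 := Finset.mem_filter.1 hj
      have hjn : j < V.length + 1 := Finset.mem_range.1 hj1.1
      refine Finset.mem_filter.2 ⟨Finset.mem_range.2 ?_, ?_⟩
      · by_cases hend : j = V.length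
        · beta_reduce; rw [if_pos hend]; omega
        · beta_reduce; rw [if_neg hend]; omega
      · exact (htrans j (by omega)).1 hj1.2
    · intro j hj j' hj' he
      have hjn : j < V.length + 1 := by
        simpa using (Finset.mem_filter.1 (Finset.mem_coe.1 hj)).1
      have hjn' : j' < V.length + 1 := by
        simpa using (Finset.mem_filter.1 (Finset.mem_coe.1 hj')).1
      simp only at he
      by_cases h1 : j = V.length <;> by_cases h2 : j' = V.length <;>
        simp only [h1, h2, if_pos, if_neg, if_true, if_false] at he <;> omega
    · intro y hy
      have hy1 := Finset.mem_filter.1 (Finset.mem_coe.1 hy)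
      have hyn : y < V.length + 1 := Finset.mem_range.1 hy1.1
      refine ⟨if y = 0 then V.length else y - 1, ?_, ?_⟩
      · apply Finset.mem_coe.2
        refine Finset.mem_filter.2 ⟨Finset.mem_range.2 ?_, ?_⟩
        · by_cases hy0 : y = 0
          · rw [if_pos hy0]; omega
          · rw [if_neg hy0]; omega
        · by_cases hy0 : y = 0
          · rw [if_pos hy0]
            exact cmp_top sharp hsharp a ha V
          · rw [if_neg hy0]
            apply (htrans (y-1) (by omega)).2
            have hyy : (if y - 1 = V.length then 0 else (y-1) + 1) = y := by
              rw [if_neg (by omega)]; omega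
            rw [hyy]
            exact hy1.2
      · show (if (if y = 0 then V.length else y - 1) = V.length then 0
            else (if y = 0 then V.length else y - 1) + 1) = y
        by_cases hy0 : y = 0
        · rw [if_pos hy0, if_pos rfl, hy0]
        · rw [if_neg hy0, if_neg (by omega)]
          omega
  -- the total count
  have hq : (Finset.univ.filter fun j : Fin ((bwt (V ++ [sharp])).set p a).length =>
        ((bwt (V ++ [sharp])).set p a).get j < a).card +
      (Finset.univ.filter fun j : Fin ((bwt (V ++ [sharp])).set p a).length =>
        (j : ℕ) ≤ p ∧ ((bwt (V ++ [sharp])).set p a).get j = a).card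
      = ((L.map (fun X => fr sharp a V (jdx sharp V X))).takeWhile
          (fun X => decide (X < a :: (V ++ [sharp])))).length := by
    rw [hA, hC, hq0fin, hbij]
    rw [Finset.filter_or, Finset.card_union_of_disjoint hdisj]
  -- final assembly
  have hB'2 : (bwt (V ++ [sharp])).set p a
      = (L.map (fun X => fr sharp a V (jdx sharp V X))).map (lst sharp) := by
    rw [hB', map_map]
    apply map_congr_left
    intro X hX
    obtain ⟨j, hjle, hXe, hXj⟩ := hmemL X hX
    show lst' sharp a V (jdx sharp V X) = lst sharp (fr sharp a V (jdx sharp V X))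
    rw [hXj]
    exact (lst_fr sharp a V hjle).symm
  have hWrot_ne : ∀ X ∈ sortedRotations (a :: (V ++ [sharp])), X ≠ [] := by
    intro X hX
    have hmm : X ∈ rotations (a :: (V ++ [sharp])) :=
      (Multiset.coe_eq_coe.mp (Multiset.sort_eq _ _) :
        sortedRotations (a :: (V ++ [sharp])) ~ rotations (a :: (V ++ [sharp]))).subset hX
    rw [rot_W sharp a V] at hmm
    rcases mem_cons.1 hmm with rfl | hmm2
    · simp
    · obtain ⟨j, _, hje⟩ := mem_map.1 hmm2
      rw [← hje]
      unfold fr; simp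
  have hbwtW : bwt (a :: (V ++ [sharp]))
      = (sortedRotations (a :: (V ++ [sharp]))).map (lst sharp) := by
    show (sortedRotations (a :: (V ++ [sharp]))).filterMap List.getLast? = _
    exact fm_eq sharp _ hWrot_ne
  have hlstW : lst sharp (a :: (V ++ [sharp])) = sharp := by
    unfold lst
    rw [show a :: (V ++ [sharp]) = (a :: V) ++ [sharp] from rfl, getLast?_concat]
    rfl
  have hsplitM : (L.map (fun X => fr sharp a V (jdx sharp V X))).map (lst sharp)
      = ((L.map (fun X => fr sharp a V (jdx sharp V X))).takeWhile
            (fun X => decide (X < a :: (V ++ [sharp])))).map (lst sharp)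
        ++ ((L.map (fun X => fr sharp a V (jdx sharp V X))).dropWhile
            (fun X => decide (X < a :: (V ++ [sharp])))).map (lst sharp) := by
    conv_lhs => rw [← takeWhile_append_dropWhile
      (p := fun X => decide (X < a :: (V ++ [sharp])))
      (l := L.map (fun X => fr sharp a V (jdx sharp V X)))]
    rw [map_append]
  have hfinal : ((bwt (V ++ [sharp])).set p a).insertIdx
      (((L.map (fun X => fr sharp a V (jdx sharp V X))).takeWhile
          (fun X => decide (X < a :: (V ++ [sharp])))).length) sharp
      = (sortedRotations (a :: (V ++ [sharp]))).map (lst sharp) := by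
    rw [hsortW, map_append, map_cons, hlstW, hB'2, hsplitM]
    rw [show (((L.map (fun X => fr sharp a V (jdx sharp V X))).takeWhile
          (fun X => decide (X < a :: (V ++ [sharp])))).length)
        = (((L.map (fun X => fr sharp a V (jdx sharp V X))).takeWhile
          (fun X => decide (X < a :: (V ++ [sharp])))).map (lst sharp)).length
      from (length_map _).symm]
    exact insertIdx_len sharp _ _
  rw [hq, hbwtW]
  exact hfinal


end BwtAux

/-- correctness of the online left-extension step of BWT construction.
Let `#` (here `sharp`) be the minimum of the alphabet, `V` a string over `Σ∖{#}`,
and `a ∈ Σ∖{#}`. Let `B = BWT(V#)`, let `p` be the (unique) position with `B[p] = #`,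
let `B'` be `B` with position `p` replaced by `a`, and let
`q = |{ j : B'[j] < a }| + |{ j ≤ p : B'[j] = a }|`. Then inserting `#` into `B'` at
position `q` yields `BWT(aV#)`. -/
theorem bwt_online_extension {α : Type*} [LinearOrder α]
    (sharp : α) (hsharp : ∀ x : α, sharp ≤ x)
    (V : List α) (hV : sharp ∉ V) (a : α) (ha : a ≠ sharp)
    (p : ℕ) (hp : (bwt (V ++ [sharp]))[p]? = some sharp) :
    ((bwt (V ++ [sharp])).set p a).insertIdx
        ((Finset.univ.filter fun j : Fin ((bwt (V ++ [sharp])).set p a).length =>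
            ((bwt (V ++ [sharp])).set p a).get j < a).card +
         (Finset.univ.filter fun j : Fin ((bwt (V ++ [sharp])).set p a).length =>
            (j : ℕ) ≤ p ∧ ((bwt (V ++ [sharp])).set p a).get j = a).card)
        sharp =
      bwt (a :: (V ++ [sharp])) := by
  exact BwtAux.main sharp hsharp V hV a ha p hp
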